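/- Let φ : ℝ → ℝ be odd and slope-restricted in [μ,ν] with μ ≤ 0 ≤ ν, and let M ∈ ℝ^{m×m} be doubly dominant. Define Φ : ℝ^m → ℝ^m by Φ(ζ)_i = φ(ζ_i). Then for all ζ ∈ ℝ^m, (νζ - Φ(ζ))ᵀ M (Φ(ζ) - μζ) + (Φ(ζ) - μζ)ᵀ Mᵀ (νζ - Φ(ζ)) ≥ 0. -/
import Mathlib

open Matrix

/-- `|M|_d`: diagonal entries kept, off-diagonal entries replaced by `-|M i j|`. -/
def absd {m : ℕ} (M : Matrix (Fin m) (Fin m) ℝ) : Matrix (Fin m) (Fin m) ℝ :=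
  Matrix.of fun i j => if i = j then M i i else -|M i j|

lemma absd_le {m : ℕ} (M : Matrix (Fin m) (Fin m) ℝ) (i j : Fin m) :
    absd M i j ≤ M i j := by
  by_cases h : i = j
  · subst h; simp [absd]
  · simp [absd, h]
    exact neg_abs_le _

lemma absd_nonpos {m : ℕ} (M : Matrix (Fin m) (Fin m) ℝ) {i j : Fin m} (h : i ≠ j) :
    absd M i j ≤ 0 := by
  simp [absd, h]

lemma row_sub {m : ℕ} (M : Matrix (Fin m) (Fin m) ℝ)
    (hrow : ∀ i, 0 ≤ ∑ j, absd M i j) (s : Finset (Fin m)) {i : Fin m} (hi : i ∈ s) :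
    0 ≤ ∑ j ∈ s, M i j := by
  have h1 : ∑ j, absd M i j ≤ ∑ j ∈ s, absd M i j := by
    rw [← Finset.sum_add_sum_compl s (fun j => absd M i j)]
    have h2 : ∑ j ∈ sᶜ, absd M i j ≤ 0 := by
      apply Finset.sum_nonpos
      intro j hj
      exact absd_nonpos M (fun h => (Finset.mem_compl.mp hj) (h ▸ hi))
    linarith
  have h3 : ∑ j ∈ s, absd M i j ≤ ∑ j ∈ s, M i j :=
    Finset.sum_le_sum (fun j _ => absd_le M i j)
  linarith [hrow i]

lemma col_sub {m : ℕ} (M : Matrix (Fin m) (Fin m) ℝ)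
    (hcol : ∀ j, 0 ≤ ∑ i, absd M i j) (s : Finset (Fin m)) {j : Fin m} (hj : j ∈ s) :
    0 ≤ ∑ i ∈ s, M i j := by
  have h1 : ∑ i, absd M i j ≤ ∑ i ∈ s, absd M i j := by
    rw [← Finset.sum_add_sum_compl s (fun i => absd M i j)]
    have h2 : ∑ i ∈ sᶜ, absd M i j ≤ 0 := by
      apply Finset.sum_nonpos
      intro i hi
      exact absd_nonpos M (fun h => (Finset.mem_compl.mp hi) (h ▸ hj))
    linarith
  have h3 : ∑ i ∈ s, absd M i j ≤ ∑ i ∈ s, M i j :=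
    Finset.sum_le_sum (fun i _ => absd_le M i j)
  linarith [hcol j]

/-- Key combinatorial lemma: for a doubly dominant matrix and nonnegative,
similarly ordered vectors `a`, `b`, the bilinear form over any index set is nonneg. -/
lemma key {m : ℕ} (M : Matrix (Fin m) (Fin m) ℝ)
    (hrow : ∀ i, 0 ≤ ∑ j, absd M i j) (hcol : ∀ j, 0 ≤ ∑ i, absd M i j)
    (s : Finset (Fin m)) :
    ∀ a b : Fin m → ℝ, (∀ i ∈ s, 0 ≤ a i) → (∀ i ∈ s, 0 ≤ b i) →
      (∀ i ∈ s, ∀ j ∈ s, (a i ≤ a j ∧ b i ≤ b j) ∨ (a j ≤ a i ∧ b j ≤ b i)) →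
      0 ≤ ∑ i ∈ s, ∑ j ∈ s, M i j * (a i * b j) := by
  induction s using Finset.strongInduction with
  | _ s ih =>
    intro a b ha hb hco
    rcases s.eq_empty_or_nonempty with rfl | hs
    · simp
    obtain ⟨i0, hi0, hmin⟩ := Finset.exists_min_image s (fun i => toLex (a i, b i)) hs
    have hmin' : ∀ i ∈ s, a i0 ≤ a i ∧ b i0 ≤ b i := by
      intro i hi
      have h := hmin i hi
      rw [Prod.Lex.le_iff] at h
      rcases h with h | ⟨h1, h2⟩
      · rcases hco i0 hi0 i hi with ⟨h3, h4⟩ | ⟨h3, h4⟩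
        · exact ⟨h3, h4⟩
        · exact absurd h3 (not_le.mpr h)
      · exact ⟨le_of_eq h1, h2⟩
    set A : Fin m → ℝ := fun i => a i - a i0 with hA
    set B : Fin m → ℝ := fun i => b i - b i0 with hB
    have expand : ∀ i j : Fin m, M i j * (a i * b j)
        = M i j * (A i * B j) + M i j * (A i * b i0)
          + M i j * (a i0 * B j) + M i j * (a i0 * b i0) := by
      intro i j; simp only [hA, hB]; ring
    have key_split : ∑ i ∈ s, ∑ j ∈ s, M i j * (a i * b j)
        = (∑ i ∈ s, ∑ j ∈ s, M i j * (A i * B j))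
          + (∑ i ∈ s, ∑ j ∈ s, M i j * (A i * b i0))
          + (∑ i ∈ s, ∑ j ∈ s, M i j * (a i0 * B j))
          + (∑ i ∈ s, ∑ j ∈ s, M i j * (a i0 * b i0)) := by
      simp only [expand, Finset.sum_add_distrib]
    rw [key_split]
    have hT2 : 0 ≤ ∑ i ∈ s, ∑ j ∈ s, M i j * (A i * b i0) := by
      apply Finset.sum_nonneg
      intro i hi
      rw [← Finset.sum_mul]
      exact mul_nonneg (row_sub M hrow s hi)
        (mul_nonneg (by simp only [hA]; linarith [(hmin' i hi).1]) (hb i0 hi0))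
    have hT3 : 0 ≤ ∑ i ∈ s, ∑ j ∈ s, M i j * (a i0 * B j) := by
      rw [Finset.sum_comm]
      apply Finset.sum_nonneg
      intro j hj
      rw [← Finset.sum_mul]
      exact mul_nonneg (col_sub M hcol s hj)
        (mul_nonneg (ha i0 hi0) (by simp only [hB]; linarith [(hmin' j hj).2]))
    have hT4 : 0 ≤ ∑ i ∈ s, ∑ j ∈ s, M i j * (a i0 * b i0) := by
      apply Finset.sum_nonneg
      intro i hi
      rw [← Finset.sum_mul]
      exact mul_nonneg (row_sub M hrow s hi) (mul_nonneg (ha i0 hi0) (hb i0 hi0))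
    have hT1 : 0 ≤ ∑ i ∈ s, ∑ j ∈ s, M i j * (A i * B j) := by
      have e1 : ∀ i : Fin m, ∑ j ∈ s.erase i0, M i j * (A i * B j)
          = ∑ j ∈ s, M i j * (A i * B j) := by
        intro i
        apply Finset.sum_erase
        simp only [hB]
        simp
      have e2 : ∑ i ∈ s.erase i0, (∑ j ∈ s.erase i0, M i j * (A i * B j))
          = ∑ i ∈ s, ∑ j ∈ s.erase i0, M i j * (A i * B j) := by
        apply Finset.sum_erase
        apply Finset.sum_eq_zero
        intro j _
        simp only [hA]
        simp
      have e3 : ∑ i ∈ s, ∑ j ∈ s, M i j * (A i * B j)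
          = ∑ i ∈ s.erase i0, ∑ j ∈ s.erase i0, M i j * (A i * B j) := by
        rw [e2]
        exact Finset.sum_congr rfl (fun i _ => (e1 i).symm)
      rw [e3]
      apply ih (s.erase i0) (Finset.erase_ssubset hi0) A B
      · intro i hi
        simp only [hA]
        linarith [(hmin' i (Finset.mem_of_mem_erase hi)).1]
      · intro i hi
        simp only [hB]
        linarith [(hmin' i (Finset.mem_of_mem_erase hi)).2]
      · intro i hi j hj
        rcases hco i (Finset.mem_of_mem_erase hi) j (Finset.mem_of_mem_erase hj) with
          ⟨h1, h2⟩ | ⟨h1, h2⟩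
        · left; constructor <;> simp only [hA, hB] <;> linarith
        · right; constructor <;> simp only [hA, hB] <;> linarith
    linarith

/-- Static O'Shea–Zames–Falb multiplier inequality for odd slope-restricted repeated
nonlinearities and doubly dominant `M`. -/
theorem stmt_3 {m : ℕ} (μ ν : ℝ) (hμ : μ ≤ 0) (hν : 0 ≤ ν)
    (φ : ℝ → ℝ) (h0 : φ 0 = 0) (hodd : ∀ t : ℝ, φ (-t) = -φ t)
    (hslope : ∀ p q : ℝ, p ≠ q → μ ≤ (φ p - φ q) / (p - q) ∧ (φ p - φ q) / (p - q) ≤ ν)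
    (M : Matrix (Fin m) (Fin m) ℝ)
    (hrow : ∀ i, 0 ≤ ∑ j, absd M i j)
    (hcol : ∀ j, 0 ≤ ∑ i, absd M i j)
    (ζ : Fin m → ℝ) :
    0 ≤ (ν • ζ - fun i => φ (ζ i)) ⬝ᵥ M.mulVec ((fun i => φ (ζ i)) - μ • ζ)
      + ((fun i => φ (ζ i)) - μ • ζ) ⬝ᵥ Mᵀ.mulVec (ν • ζ - fun i => φ (ζ i)) := by
  classical
  -- slope facts
  have hub : ∀ t : ℝ, 0 ≤ t → φ t ≤ ν * t := by
    intro t ht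
    rcases ht.eq_or_lt with h | h
    · rw [← h, h0]; simp
    · have h2 := (hslope t 0 (ne_of_gt h)).2
      rw [h0, sub_zero, sub_zero] at h2
      calc φ t = (φ t / t) * t := by field_simp
        _ ≤ ν * t := mul_le_mul_of_nonneg_right h2 ht
  have hlb : ∀ t : ℝ, 0 ≤ t → μ * t ≤ φ t := by
    intro t ht
    rcases ht.eq_or_lt with h | h
    · rw [← h, h0]; simp
    · have h2 := (hslope t 0 (ne_of_gt h)).1
      rw [h0, sub_zero, sub_zero] at h2
      calc μ * t ≤ (φ t / t) * t := mul_le_mul_of_nonneg_right h2 ht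
        _ = φ t := by field_simp
  have hmono : ∀ u v : ℝ, u ≤ v →
      (ν * u - φ u ≤ ν * v - φ v) ∧ (φ u - μ * u ≤ φ v - μ * v) := by
    intro u v huv
    rcases huv.eq_or_lt with rfl | h
    · exact ⟨le_refl _, le_refl _⟩
    · have hd : (0:ℝ) < v - u := by linarith
      have h1 := (hslope v u (by intro he; rw [he] at h; exact lt_irrefl u h)).1
      have h2 := (hslope v u (by intro he; rw [he] at h; exact lt_irrefl u h)).2
      have h1' : μ * (v - u) ≤ φ v - φ u := (le_div_iff₀ hd).mp h1
      have h2' : φ v - φ u ≤ ν * (v - u) := (div_le_iff₀ hd).mp h2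
      constructor <;> nlinarith
  -- sign flips
  set ε : Fin m → ℝ := fun i => if ζ i < 0 then -1 else 1 with hε
  have hε1 : ∀ i, ε i = 1 ∨ ε i = -1 := by
    intro i; simp only [hε]; split_ifs <;> simp
  have hε2 : ∀ i, ε i * ε i = 1 := by
    intro i; rcases hε1 i with h | h <;> rw [h] <;> norm_num
  have hεabs : ∀ i, |ε i| = 1 := by
    intro i; rcases hε1 i with h | h <;> rw [h] <;> norm_num
  set x : Fin m → ℝ := fun i => ε i * ζ i with hx
  have hxnn : ∀ i, 0 ≤ x i := by
    intro i
    simp only [hx, hε]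
    split_ifs with h
    · linarith
    · push_neg at h; linarith
  set a : Fin m → ℝ := fun i => ε i * (ν * ζ i - φ (ζ i)) with ha
  set b : Fin m → ℝ := fun i => ε i * (φ (ζ i) - μ * ζ i) with hb
  have hax : ∀ i, a i = ν * x i - φ (x i) := by
    intro i
    simp only [ha, hx, hε]
    split_ifs with h
    · rw [neg_one_mul, neg_one_mul, hodd]; ring
    · rw [one_mul, one_mul]
  have hbx : ∀ i, b i = φ (x i) - μ * x i := by
    intro i
    simp only [hb, hx, hε]
    split_ifs with h
    · rw [neg_one_mul, neg_one_mul, hodd]; ring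
    · rw [one_mul, one_mul]
  set M' : Matrix (Fin m) (Fin m) ℝ := Matrix.of (fun i j => ε i * ε j * M i j) with hM'
  have habsd : ∀ i j, absd M' i j = absd M i j := by
    intro i j
    by_cases h : i = j
    · subst h
      simp only [absd, Matrix.of_apply, if_pos rfl, hM']
      rw [hε2 i, one_mul]
    · simp only [absd, Matrix.of_apply, if_neg h, hM']
      rw [abs_mul, abs_mul, hεabs i, hεabs j]
      norm_num
  have hrow' : ∀ i, 0 ≤ ∑ j, absd M' i j := by
    intro i; simp only [habsd]; exact hrow i
  have hcol' : ∀ j, 0 ≤ ∑ i, absd M' i j := by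
    intro j; simp only [habsd]; exact hcol j
  -- apply key lemma
  have hmain : 0 ≤ ∑ i, ∑ j, M' i j * (a i * b j) := by
    apply key M' hrow' hcol' Finset.univ a b
    · intro i _
      rw [hax i]
      linarith [hub (x i) (hxnn i)]
    · intro i _
      rw [hbx i]
      linarith [hlb (x i) (hxnn i)]
    · intro i _ j _
      rcases le_total (x i) (x j) with h | h
      · left
        rw [hax i, hax j, hbx i, hbx j]
        exact (hmono _ _ h)
      · right
        rw [hax i, hax j, hbx i, hbx j]
        exact (hmono _ _ h)
  have hconv : ∀ i j : Fin m, M' i j * (a i * b j)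
      = M i j * ((ν * ζ i - φ (ζ i)) * (φ (ζ j) - μ * ζ j)) := by
    intro i j
    simp only [hM', Matrix.of_apply, ha, hb]
    calc ε i * ε j * M i j * (ε i * (ν * ζ i - φ (ζ i)) * (ε j * (φ (ζ j) - μ * ζ j)))
        = (ε i * ε i) * ((ε j * ε j) * (M i j * ((ν * ζ i - φ (ζ i)) * (φ (ζ j) - μ * ζ j)))) := by
          ring
      _ = M i j * ((ν * ζ i - φ (ζ i)) * (φ (ζ j) - μ * ζ j)) := by
          rw [hε2 i, hε2 j]; ring
  have hmain2 : 0 ≤ ∑ i, ∑ j, M i j * ((ν * ζ i - φ (ζ i)) * (φ (ζ j) - μ * ζ j)) := by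
    rw [← Finset.sum_congr rfl (fun i _ => Finset.sum_congr rfl (fun j _ => hconv i j))]
    exact hmain
  have expr_eq : (ν • ζ - fun i => φ (ζ i)) ⬝ᵥ M.mulVec ((fun i => φ (ζ i)) - μ • ζ)
      + ((fun i => φ (ζ i)) - μ • ζ) ⬝ᵥ Mᵀ.mulVec (ν • ζ - fun i => φ (ζ i))
      = (∑ i, ∑ j, M i j * ((ν * ζ i - φ (ζ i)) * (φ (ζ j) - μ * ζ j)))
        + (∑ i, ∑ j, M i j * ((ν * ζ i - φ (ζ i)) * (φ (ζ j) - μ * ζ j))) := by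
    simp only [dotProduct, mulVec, Pi.sub_apply, Pi.smul_apply, smul_eq_mul,
      Matrix.transpose_apply, Finset.mul_sum]
    congr 1
    · exact Finset.sum_congr rfl fun i _ => Finset.sum_congr rfl fun j _ => by ring
    · rw [Finset.sum_comm]
      exact Finset.sum_congr rfl fun i _ => Finset.sum_congr rfl fun j _ => by ring
  rw [expr_eq]
  linarith
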